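/- Let D ∈ ℝ^{k×d}, let G = DᵀD have eigenvalues g₁,…,g_d ≥ 0, let λ > 0, σ² > 0, and set γ = Σ_{l=1}^{d} g_l/(λ + g_l). Let δμ ∈ ℝ^d, μ ∈ ℝ^d, r ∈ ℝ^k satisfy the two stationarity conditions σ² = (‖r − Dμ‖₂² + λ‖δμ‖₂²)/k and λ(‖δμ‖₂² + tr(σ²(G + λI_d)⁻¹)) = d·σ². Then λ‖δμ‖₂² = γσ² and ‖r − Dμ‖₂² = (k − γ)σ²; equivalently, λ‖δμ‖₂²/γ = ‖r − Dμ‖₂²/(k − γ) = σ². -/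

import Mathlib

open Matrix

lemma trace_inv_eq {d : ℕ} (G : Matrix (Fin d) (Fin d) ℝ) (hG : G.PosSemidef)
    (lam : ℝ) (hlam : 0 < lam) :
    Matrix.trace (G + lam • (1 : Matrix (Fin d) (Fin d) ℝ))⁻¹
      = ∑ l, (lam + hG.isHermitian.eigenvalues l)⁻¹ := by
  set hA := hG.isHermitian
  set U : Matrix (Fin d) (Fin d) ℝ := (hA.eigenvectorUnitary : Matrix (Fin d) (Fin d) ℝ)
  have hU1 : star U * U = 1 := (Matrix.mem_unitaryGroup_iff').mp hA.eigenvectorUnitary.2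
  have hU2 : U * star U = 1 := (Matrix.mem_unitaryGroup_iff).mp hA.eigenvectorUnitary.2
  set w : Fin d → ℝ := fun l => lam + hA.eigenvalues l with hw
  have hw0 : ∀ l, w l ≠ 0 := fun l => by
    have := hG.eigenvalues_nonneg l
    dsimp [w]; linarith
  have hdiag : diagonal (RCLike.ofReal ∘ hA.eigenvalues)
      + lam • (1 : Matrix (Fin d) (Fin d) ℝ) = diagonal w := by
    ext i j
    by_cases h : i = j
    · subst h
      simp [Matrix.diagonal_apply_eq, Matrix.one_apply_eq, w, add_comm]
    · simp [Matrix.diagonal_apply_ne _ h, Matrix.one_apply_ne h]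
  have hconj : G + lam • (1 : Matrix (Fin d) (Fin d) ℝ) = U * diagonal w * star U := by
    have hspec := hA.spectral_theorem
    rw [Unitary.conjStarAlgAut_apply] at hspec
    have h1 : lam • (1 : Matrix (Fin d) (Fin d) ℝ) = U * (lam • 1) * star U := by
      rw [Matrix.mul_smul, Matrix.smul_mul, mul_one, hU2]
    rw [← hdiag, Matrix.mul_add, Matrix.add_mul, ← hspec, ← h1]
  have hdinv : diagonal w * diagonal w⁻¹ = 1 := by
    have h : (fun i => w i * w⁻¹ i) = fun _ => (1 : ℝ) :=
      funext fun l => mul_inv_cancel₀ (hw0 l)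
    rw [Matrix.diagonal_mul_diagonal]
    show diagonal (fun i => w i * w⁻¹ i) = 1
    rw [h, Matrix.diagonal_one]
  have hinv : (G + lam • (1 : Matrix (Fin d) (Fin d) ℝ))⁻¹ = U * diagonal w⁻¹ * star U := by
    rw [hconj]
    apply Matrix.inv_eq_right_inv
    rw [Matrix.mul_assoc (U * diagonal w) (star U) (U * diagonal w⁻¹ * star U),
        ← Matrix.mul_assoc (star U) (U * diagonal w⁻¹) (star U),
        ← Matrix.mul_assoc (star U) U (diagonal w⁻¹), hU1, one_mul,
        ← Matrix.mul_assoc, Matrix.mul_assoc U (diagonal w) (diagonal w⁻¹), hdinv,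
        mul_one, hU2]
  rw [hinv, Matrix.trace_mul_cycle, hU1, one_mul, Matrix.trace_diagonal]
  simp [w]

theorem stationarity_conditions_split
    {k d : ℕ} (hk : 0 < k) (hd : 0 < d)
    (D : Matrix (Fin k) (Fin d) ℝ)
    (G : Matrix (Fin d) (Fin d) ℝ) (hGdef : G = Dᵀ * D) (hG : G.PosSemidef)
    (g : Fin d → ℝ) (hg : g = hG.isHermitian.eigenvalues)
    (lam σsq : ℝ) (hlam : 0 < lam) (hσsq : 0 < σsq)
    (γ : ℝ) (hγ : γ = ∑ l, g l / (lam + g l))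
    (δμ μ : Fin d → ℝ) (r : Fin k → ℝ)
    (hstat1 : σsq = ((r - D *ᵥ μ) ⬝ᵥ (r - D *ᵥ μ) + lam * (δμ ⬝ᵥ δμ)) / k)
    (hstat2 : lam * (δμ ⬝ᵥ δμ
        + Matrix.trace (σsq • (G + lam • (1 : Matrix (Fin d) (Fin d) ℝ))⁻¹))
      = d * σsq) :
    lam * (δμ ⬝ᵥ δμ) = γ * σsq ∧
    (r - D *ᵥ μ) ⬝ᵥ (r - D *ᵥ μ) = (k - γ) * σsq := by
  have htr := trace_inv_eq G hG lam hlam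
  rw [Matrix.trace_smul, htr, ← hg] at hstat2
  simp only [smul_eq_mul, mul_add] at hstat2
  set S : ℝ := ∑ l, (lam + g l)⁻¹ with hS
  have hw0 : ∀ l, lam + g l ≠ 0 := fun l => by
    have := hG.eigenvalues_nonneg l
    rw [hg]; linarith
  have hsum : lam * S = (d : ℝ) - γ := by
    rw [hS, hγ, Finset.mul_sum]
    have h : ∀ l ∈ Finset.univ, lam * (lam + g l)⁻¹ = 1 - g l / (lam + g l) := by
      intro l _
      have hne := hw0 l
      field_simp
      ring
    rw [Finset.sum_congr rfl h, Finset.sum_sub_distrib]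
    simp
  have h2 : lam * (σsq * S) = ((d : ℝ) - γ) * σsq := by
    rw [show lam * (σsq * S) = (lam * S) * σsq from by ring, hsum]
  have h1 : lam * (δμ ⬝ᵥ δμ) = γ * σsq := by linarith
  refine ⟨h1, ?_⟩
  have hk' : (0 : ℝ) < k := Nat.cast_pos.mpr hk
  have hks : σsq * k = (r - D *ᵥ μ) ⬝ᵥ (r - D *ᵥ μ) + lam * (δμ ⬝ᵥ δμ) := by
    rw [hstat1, div_mul_cancel₀ _ (ne_of_gt hk')]
  rw [h1] at hks
  linarith
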